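/- Let m, r and d be integers with m ≥ 2, d ≥ 1 odd and 2 ≤ 2r ≤ m−1. Set n = md, w = (m(d−1)+2r)/2, α = ⌊w/(n−2w)⌋, s = w mod (n−2w), and let 𝒲 = λA_𝒲 − B_𝒲 be the n×n skew-symmetric pencil given by the direct sum of s copies of M_{α+1} followed by n−2w−s copies of M_α. Then the ℂ-linear subspace {(XᵀA_𝒲 + A_𝒲X, XᵀB_𝒲 + B_𝒲X) : X ∈ ℂ^{n×n}} of pairs of n×n complex matrices has dimension n(n−1) − (1/2)(m−2r−1)(m(d+1)−2r); equivalently, the codimension of the congruence orbit of 𝒲 in the space of md×md skew-symmetric pencils equals (1/2)(m−2r−1)(m(d+1)−2r). -/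

import Mathlib

open Matrix

noncomputable section

/-- The `k × (k+1)` matrix `G_k` with `(G_k)_{i,i} = 1` and all other entries `0`. -/
def Gmat (k : ℕ) : Matrix (Fin k) (Fin (k+1)) ℂ := fun i j => if j.1 = i.1 then 1 else 0

/-- The `k × (k+1)` matrix `F_k` with `(F_k)_{i,i+1} = 1` and all other entries `0`. -/
def Fmat (k : ℕ) : Matrix (Fin k) (Fin (k+1)) ℂ := fun i j => if j.1 = i.1 + 1 then 1 else 0

/-- The `k × k` upper triangular Jordan block `J_k(μ)`. -/
def Jord (k : ℕ) (μ : ℂ) : Matrix (Fin k) (Fin k) ℂ :=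
  fun i j => if i = j then μ else if j.1 = i.1 + 1 then 1 else 0

/-- λ-coefficient of the canonical skew-symmetric singular block
`M_k = λ [[0, G_k],[−G_kᵀ, 0]] − [[0, F_k],[−F_kᵀ, 0]]`, written as a single
`(2k+1) × (2k+1)` matrix (rows/columns `0,…,k-1` correspond to the first block
row/column, rows/columns `k,…,2k` to the second). -/
def MA (k : ℕ) : Matrix (Fin (2*k+1)) (Fin (2*k+1)) ℂ := fun i j =>
  if i.1 < k ∧ j.1 = k + i.1 then 1
  else if j.1 < k ∧ i.1 = k + j.1 then -1 else 0

/-- Constant coefficient of `M_k` (so that `M_k = λ • MA k − MB k`). -/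
def MB (k : ℕ) : Matrix (Fin (2*k+1)) (Fin (2*k+1)) ℂ := fun i j =>
  if i.1 < k ∧ j.1 = k + i.1 + 1 then 1
  else if j.1 < k ∧ i.1 = k + j.1 + 1 then -1 else 0

/-- Sizes of the blocks in the generic skew-symmetric pencil of rank `2w`:
the first `s = w mod (n−2w)` blocks are `M_{α+1}`, the rest are `M_α`,
`α = ⌊w/(n−2w)⌋`. -/
def genIdx (n w : ℕ) (i : Fin (n - 2*w)) : ℕ :=
  if i.1 < w % (n - 2*w) then w / (n - 2*w) + 1 else w / (n - 2*w)

/-- λ-coefficient of the generic pencil `𝒲 = M_{α+1} ⊕ ⋯ ⊕ M_{α+1} ⊕ M_α ⊕ ⋯ ⊕ M_α`. -/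
def WA (n w : ℕ) :
    Matrix ((i : Fin (n - 2*w)) × Fin (2 * genIdx n w i + 1))
           ((i : Fin (n - 2*w)) × Fin (2 * genIdx n w i + 1)) ℂ :=
  Matrix.blockDiagonal' fun i => MA (genIdx n w i)

/-- Constant coefficient of the generic pencil `𝒲`. -/
def WB (n w : ℕ) :
    Matrix ((i : Fin (n - 2*w)) × Fin (2 * genIdx n w i + 1))
           ((i : Fin (n - 2*w)) × Fin (2 * genIdx n w i + 1)) ℂ :=
  Matrix.blockDiagonal' fun i => MB (genIdx n w i)

/-- Congruence orbit of the pencil `λA − B`: all pencils `λ SᵀAS − SᵀBS`, `S` invertible. -/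
def congOrbit {p : Type*} [Fintype p] [DecidableEq p] (A B : Matrix p p ℂ) :
    Set (Matrix p p ℂ × Matrix p p ℂ) :=
  {P | ∃ S : Matrix p p ℂ, IsUnit S ∧ P = (Sᵀ * A * S, Sᵀ * B * S)}

/-- Strict equivalence orbit of the pencil `λA − B`: all pencils `λ QAR − QBR`,
`Q, R` invertible. -/
def eqvOrbit {R C : Type*} [Fintype R] [Fintype C] [DecidableEq R] [DecidableEq C]
    (A B : Matrix R C ℂ) : Set (Matrix R C ℂ × Matrix R C ℂ) :=
  {P | ∃ (Q : Matrix R R ℂ) (Z : Matrix C C ℂ), IsUnit Q ∧ IsUnit Z ∧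
    P = (Q * A * Z, Q * B * Z)}

/-- The (normal) rank of the pencil `λA − B`, i.e. the rank of `λA − B` as a matrix
over the field of rational functions `ℂ(λ)`. -/
def pencilRank {p : Type*} [Fintype p] (A B : Matrix p p ℂ) : ℕ :=
  Matrix.rank (Matrix.of fun i j =>
    (RatFunc.X : RatFunc ℂ) * algebraMap ℂ (RatFunc ℂ) (A i j) -
      algebraMap ℂ (RatFunc ℂ) (B i j))

/-- An `m × m` matrix polynomial of grade `d` is a tuple `(A_0, …, A_d)`,
identified with `P(λ) = λᵈA_d + ⋯ + λA_1 + A_0`.  Its (normal) rank is its rank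
as a matrix over `ℂ(λ)`. -/
def polyRank {m d : ℕ} (P : Fin (d+1) → Matrix (Fin m) (Fin m) ℂ) : ℕ :=
  Matrix.rank (Matrix.of fun a b =>
    ∑ i : Fin (d+1), (RatFunc.X : RatFunc ℂ) ^ i.1 * algebraMap ℂ (RatFunc ℂ) (P i a b))

/-- λ-coefficient of the block-pencil linearization `L_P` of an `m × m` matrix polynomial
of odd grade `d`.  Block row/column indices are `0`-based (`j = i − 1` for the `1`-based
index `i` of the paper): the `(j,j)` block is `λA_{d−j} + A_{d−j−1}` for even `j` and `0`
for odd `j`; the `(j,j+1)` block is `−I` for even `j` and `−λI` for odd `j`; the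
`(j+1,j)` block is `I` for even `j` and `λI` for odd `j`. -/
def LA {m d : ℕ} (P : Fin (d+1) → Matrix (Fin m) (Fin m) ℂ) :
    Matrix (Fin d × Fin m) (Fin d × Fin m) ℂ := fun p q =>
  if p.1 = q.1 then (if p.1.1 % 2 = 0 then P ⟨d - p.1.1, by omega⟩ p.2 q.2 else 0)
  else if q.1.1 = p.1.1 + 1 then (if p.1.1 % 2 = 1 ∧ p.2 = q.2 then -1 else 0)
  else if p.1.1 = q.1.1 + 1 then (if q.1.1 % 2 = 1 ∧ p.2 = q.2 then 1 else 0)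
  else 0

/-- Constant coefficient of the linearization `L_P` (so that `L_P = λ • LA P − LB P`). -/
def LB {m d : ℕ} (P : Fin (d+1) → Matrix (Fin m) (Fin m) ℂ) :
    Matrix (Fin d × Fin m) (Fin d × Fin m) ℂ := fun p q =>
  if p.1 = q.1 then (if p.1.1 % 2 = 0 then -(P ⟨d - p.1.1 - 1, by omega⟩ p.2 q.2) else 0)
  else if q.1.1 = p.1.1 + 1 then (if p.1.1 % 2 = 0 ∧ p.2 = q.2 then 1 else 0)
  else if p.1.1 = q.1.1 + 1 then (if q.1.1 % 2 = 0 ∧ p.2 = q.2 then -1 else 0)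
  else 0

/-- The generalized Sylvester space: all pencils `L_Q` for `Q` an `m × m`
skew-symmetric matrix polynomial of grade `d`. -/
def GSYL (m d : ℕ) :
    Set (Matrix (Fin d × Fin m) (Fin d × Fin m) ℂ × Matrix (Fin d × Fin m) (Fin d × Fin m) ℂ) :=
  {L | ∃ Q : Fin (d+1) → Matrix (Fin m) (Fin m) ℂ,
    (∀ i, (Q i)ᵀ = -(Q i)) ∧ L = (LA Q, LB Q)}

/-- Square of the Frobenius norm of a complex matrix. -/
def frobSq {p q : Type*} [Fintype p] [Fintype q] (A : Matrix p q ℂ) : ℝ :=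
  ∑ i, ∑ j, ‖A i j‖ ^ 2

/-- The point of `ℂ^(2n²)` given by the entries of the pair of matrices `(C, D)`. -/
def pairPoint {n : ℕ} (C D : Matrix (Fin n) (Fin n) ℂ) :
    (Fin n × Fin n) ⊕ (Fin n × Fin n) → ℂ :=
  Sum.elim (fun x => C x.1 x.2) (fun x => D x.1 x.2)

/-- The linear map `X ↦ (XᵀA + AX, XᵀB + BX)` whose range is the tangent space at
`λA − B` to the congruence orbit of `λA − B`. -/
def congTangentMap {p : Type*} [Fintype p] [DecidableEq p] (A B : Matrix p p ℂ) :
    Matrix p p ℂ →ₗ[ℂ] Matrix p p ℂ × Matrix p p ℂ where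
  toFun X := (Xᵀ * A + A * X, Xᵀ * B + B * X)
  map_add' X Y := by
    simp only [Matrix.transpose_add, Matrix.add_mul, Matrix.mul_add, Prod.mk_add_mk,
      Prod.mk.injEq]
    constructor <;> abel
  map_smul' c X := by
    simp only [Matrix.transpose_smul, Matrix.smul_mul, Matrix.mul_smul, smul_add,
      RingHom.id_apply, Prod.smul_mk]

/-- The canonical skew-symmetric Smith form: the direct sum of the `2 × 2` blocks
`[[0, g_j],[−g_j, 0]]`, `j = 1, …, r`, followed by an `(m−2r) × (m−2r)` zero block. -/
def skewSmith (m r : ℕ) (g : Fin r → Polynomial ℂ) : Matrix (Fin m) (Fin m) (Polynomial ℂ) :=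
  fun i j =>
    if h : i.1 + 1 = j.1 ∧ i.1 % 2 = 0 ∧ j.1 < 2*r then g ⟨i.1 / 2, by omega⟩
    else if h' : j.1 + 1 = i.1 ∧ j.1 % 2 = 0 ∧ i.1 < 2*r then -(g ⟨j.1 / 2, by omega⟩)
    else 0

/-- Descriptor of a canonical block of the skew-symmetric Kronecker canonical form:
`H h μ` is the regular block `H_h(μ)` for a finite eigenvalue `μ`, `K k` is the regular
block `K_k` for the infinite eigenvalue, and `M k` is the singular block `M_k`. -/
inductive SkewBlock where
  | H : ℕ → ℂ → SkewBlock
  | K : ℕ → SkewBlock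
  | M : ℕ → SkewBlock

/-- Size of a canonical skew-symmetric block. -/
def blockSize : SkewBlock → ℕ
  | .H h _ => 2*h
  | .K k => 2*k
  | .M k => 2*k + 1

/-- Admissibility of a block: `H_h(μ)` requires `h ≥ 1` and `K_k` requires `k ≥ 1`. -/
def validBlock : SkewBlock → Prop
  | .H h _ => 1 ≤ h
  | .K k => 1 ≤ k
  | .M _ => True

/-- λ-coefficient of a canonical skew-symmetric block:
`H_h(μ) = λ[[0, I_h],[−I_h, 0]] − [[0, J_h(μ)],[−J_h(μ)ᵀ, 0]]`,
`K_k = λ[[0, J_k(0)],[−J_k(0)ᵀ, 0]] − [[0, I_k],[−I_k, 0]]`,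
`M_k = λ[[0, G_k],[−G_kᵀ, 0]] − [[0, F_k],[−F_kᵀ, 0]]`. -/
def blockA : (b : SkewBlock) → Matrix (Fin (blockSize b)) (Fin (blockSize b)) ℂ
  | .H h _ => fun i j =>
      if i.1 < h ∧ j.1 = h + i.1 then 1
      else if j.1 < h ∧ i.1 = h + j.1 then -1 else 0
  | .K k => fun i j =>
      if i.1 < k ∧ j.1 = k + i.1 + 1 then 1
      else if j.1 < k ∧ i.1 = k + j.1 + 1 then -1 else 0
  | .M k => MA k

/-- Constant coefficient of a canonical skew-symmetric block (the block pencil is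
`λ • blockA b − blockB b`). -/
def blockB : (b : SkewBlock) → Matrix (Fin (blockSize b)) (Fin (blockSize b)) ℂ
  | .H h μ => fun i j =>
      if i.1 < h ∧ j.1 = h + i.1 then μ
      else if i.1 < h ∧ j.1 = h + i.1 + 1 then 1
      else if j.1 < h ∧ i.1 = h + j.1 then -μ
      else if j.1 < h ∧ i.1 = h + j.1 + 1 then -1 else 0
  | .K k => fun i j =>
      if i.1 < k ∧ j.1 = k + i.1 then 1
      else if j.1 < k ∧ i.1 = k + j.1 then -1 else 0
  | .M k => MB k

/-- λ-coefficient of the Kronecker regular block `E_k(μ)`, where `μ : Option ℂ`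
(`some c` is a finite eigenvalue `c`, `none` is the eigenvalue `∞`):
`E_k(c) = λI_k − J_k(c)` and `E_k(∞) = λJ_k(0) − I_k`. -/
def EA (k : ℕ) : Option ℂ → Matrix (Fin k) (Fin k) ℂ
  | some _ => 1
  | none => Jord k 0

/-- Constant coefficient of `E_k(μ)` (the block pencil is `λ • EA k μ − EB k μ`). -/
def EB (k : ℕ) : Option ℂ → Matrix (Fin k) (Fin k) ℂ
  | some c => Jord k c
  | none => 1

end
set_option linter.unreachableTactic false
set_option linter.unusedTactic false
set_option maxHeartbeats 1000000 in
section
noncomputable section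
namespace Aux

variable {t : ℕ} (k : Fin t → ℕ)

abbrev Idx (k : Fin t → ℕ) := (i : Fin t) × Fin (2 * k i + 1)

def AA : Matrix (Idx k) (Idx k) ℂ := blockDiagonal' fun i => MA (k i)
def BB : Matrix (Idx k) (Idx k) ℂ := blockDiagonal' fun i => MB (k i)

variable {k}

def ent (X : Matrix (Idx k) (Idx k) ℂ) (i j : Fin t) (p q : ℕ) : ℂ :=
  if h : p < 2 * k i + 1 ∧ q < 2 * k j + 1 then X ⟨i, ⟨p, h.1⟩⟩ ⟨j, ⟨q, h.2⟩⟩ else 0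

lemma ent_eq (X : Matrix (Idx k) (Idx k) ℂ) (i j : Fin t) (p q : ℕ)
    (hp : p < 2 * k i + 1) (hq : q < 2 * k j + 1) :
    ent X i j p q = X ⟨i, ⟨p, hp⟩⟩ ⟨j, ⟨q, hq⟩⟩ := by
  simp [ent, hp, hq]


lemma rowA (ki : ℕ) (p : Fin (2*ki+1)) (f : Fin (2*ki+1) → ℂ) :
    ∑ r, MA ki p r * f r =
      if h : p.1 < ki then f ⟨ki + p.1, by omega⟩
      else if h' : p.1 < 2*ki then -f ⟨p.1 - ki, by omega⟩ else 0 := by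
  by_cases h : p.1 < ki
  · rw [dif_pos h, Finset.sum_eq_single (⟨ki + p.1, by omega⟩ : Fin (2*ki+1))]
    · simp only [MA]; split_ifs with h1 h2 <;> first | (exfalso; omega) | ring1 | (simp only [and_true, true_and] at *; first | (exfalso; omega) | ring1)
    · intro b _ hb
      have hb' : b.1 ≠ ki + p.1 := by simpa [Fin.ext_iff] using hb
      simp only [MA]; split_ifs with h1 h2 <;> first | (exfalso; omega) | ring1 | (simp only [and_true, true_and] at *; first | (exfalso; omega) | ring1)
    · simp
  · by_cases h' : p.1 < 2*ki
    · rw [dif_neg h, dif_pos h', Finset.sum_eq_single (⟨p.1 - ki, by omega⟩ : Fin (2*ki+1))]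
      · simp only [MA]; split_ifs with h1 h2 <;> first | (exfalso; omega) | ring1 | (simp only [and_true, true_and] at *; first | (exfalso; omega) | ring1)
      · intro b _ hb
        have hb' : b.1 ≠ p.1 - ki := by simpa [Fin.ext_iff] using hb
        simp only [MA]; split_ifs with h1 h2 <;> first | (exfalso; omega) | ring1 | (simp only [and_true, true_and] at *; first | (exfalso; omega) | ring1)
      · simp
    · rw [dif_neg h, dif_neg h']
      apply Finset.sum_eq_zero
      intro b _
      simp only [MA]; split_ifs with h1 h2 <;> first | (exfalso; omega) | ring1 | (simp only [and_true, true_and] at *; first | (exfalso; omega) | ring1)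

lemma colA (kj : ℕ) (q : Fin (2*kj+1)) (f : Fin (2*kj+1) → ℂ) :
    ∑ r, f r * MA kj r q =
      if h : q.1 < kj then -f ⟨kj + q.1, by omega⟩
      else if h' : q.1 < 2*kj then f ⟨q.1 - kj, by omega⟩ else 0 := by
  by_cases h : q.1 < kj
  · rw [dif_pos h, Finset.sum_eq_single (⟨kj + q.1, by omega⟩ : Fin (2*kj+1))]
    · simp only [MA]; split_ifs with h1 h2 <;> first | (exfalso; omega) | ring1 | (simp only [and_true, true_and] at *; first | (exfalso; omega) | ring1)
    · intro b _ hb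
      have hb' : b.1 ≠ kj + q.1 := by simpa [Fin.ext_iff] using hb
      simp only [MA]; split_ifs with h1 h2 <;> first | (exfalso; omega) | ring1 | (simp only [and_true, true_and] at *; first | (exfalso; omega) | ring1)
    · simp
  · by_cases h' : q.1 < 2*kj
    · rw [dif_neg h, dif_pos h', Finset.sum_eq_single (⟨q.1 - kj, by omega⟩ : Fin (2*kj+1))]
      · simp only [MA]; split_ifs with h1 h2 <;> first | (exfalso; omega) | ring1 | (simp only [and_true, true_and] at *; first | (exfalso; omega) | ring1)
      · intro b _ hb
        have hb' : b.1 ≠ q.1 - kj := by simpa [Fin.ext_iff] using hb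
        simp only [MA]; split_ifs with h1 h2 <;> first | (exfalso; omega) | ring1 | (simp only [and_true, true_and] at *; first | (exfalso; omega) | ring1)
      · simp
    · rw [dif_neg h, dif_neg h']
      apply Finset.sum_eq_zero
      intro b _
      simp only [MA]; split_ifs with h1 h2 <;> first | (exfalso; omega) | ring1 | (simp only [and_true, true_and] at *; first | (exfalso; omega) | ring1)

lemma rowB (ki : ℕ) (p : Fin (2*ki+1)) (f : Fin (2*ki+1) → ℂ) :
    ∑ r, MB ki p r * f r =
      if h : p.1 < ki then f ⟨ki + p.1 + 1, by omega⟩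
      else if h' : ki + 1 ≤ p.1 then -f ⟨p.1 - ki - 1, by omega⟩ else 0 := by
  by_cases h : p.1 < ki
  · rw [dif_pos h, Finset.sum_eq_single (⟨ki + p.1 + 1, by omega⟩ : Fin (2*ki+1))]
    · simp only [MB]; split_ifs with h1 h2 <;> first | (exfalso; omega) | ring1 | (simp only [and_true, true_and] at *; first | (exfalso; omega) | ring1)
    · intro b _ hb
      have hb' : b.1 ≠ ki + p.1 + 1 := by simpa [Fin.ext_iff] using hb
      simp only [MB]; split_ifs with h1 h2 <;> first | (exfalso; omega) | ring1 | (simp only [and_true, true_and] at *; first | (exfalso; omega) | ring1)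
    · simp
  · by_cases h' : ki + 1 ≤ p.1
    · rw [dif_neg h, dif_pos h', Finset.sum_eq_single (⟨p.1 - ki - 1, by omega⟩ : Fin (2*ki+1))]
      · simp only [MB]; split_ifs with h1 h2 <;> first | (exfalso; omega) | ring1 | (simp only [and_true, true_and] at *; first | (exfalso; omega) | ring1)
      · intro b _ hb
        have hb' : b.1 ≠ p.1 - ki - 1 := by simpa [Fin.ext_iff] using hb
        simp only [MB]; split_ifs with h1 h2 <;> first | (exfalso; omega) | ring1 | (simp only [and_true, true_and] at *; first | (exfalso; omega) | ring1)
      · simp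
    · rw [dif_neg h, dif_neg h']
      apply Finset.sum_eq_zero
      intro b _
      simp only [MB]; split_ifs with h1 h2 <;> first | (exfalso; omega) | ring1 | (simp only [and_true, true_and] at *; first | (exfalso; omega) | ring1)

lemma colB (kj : ℕ) (q : Fin (2*kj+1)) (f : Fin (2*kj+1) → ℂ) :
    ∑ r, f r * MB kj r q =
      if h : q.1 < kj then -f ⟨kj + q.1 + 1, by omega⟩
      else if h' : kj + 1 ≤ q.1 then f ⟨q.1 - kj - 1, by omega⟩ else 0 := by
  by_cases h : q.1 < kj
  · rw [dif_pos h, Finset.sum_eq_single (⟨kj + q.1 + 1, by omega⟩ : Fin (2*kj+1))]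
    · simp only [MB]; split_ifs with h1 h2 <;> first | (exfalso; omega) | ring1 | (simp only [and_true, true_and] at *; first | (exfalso; omega) | ring1)
    · intro b _ hb
      have hb' : b.1 ≠ kj + q.1 + 1 := by simpa [Fin.ext_iff] using hb
      simp only [MB]; split_ifs with h1 h2 <;> first | (exfalso; omega) | ring1 | (simp only [and_true, true_and] at *; first | (exfalso; omega) | ring1)
    · simp
  · by_cases h' : kj + 1 ≤ q.1
    · rw [dif_neg h, dif_pos h', Finset.sum_eq_single (⟨q.1 - kj - 1, by omega⟩ : Fin (2*kj+1))]
      · simp only [MB]; split_ifs with h1 h2 <;> first | (exfalso; omega) | ring1 | (simp only [and_true, true_and] at *; first | (exfalso; omega) | ring1)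
      · intro b _ hb
        have hb' : b.1 ≠ q.1 - kj - 1 := by simpa [Fin.ext_iff] using hb
        simp only [MB]; split_ifs with h1 h2 <;> first | (exfalso; omega) | ring1 | (simp only [and_true, true_and] at *; first | (exfalso; omega) | ring1)
      · simp
    · rw [dif_neg h, dif_neg h']
      apply Finset.sum_eq_zero
      intro b _
      simp only [MB]; split_ifs with h1 h2 <;> first | (exfalso; omega) | ring1 | (simp only [and_true, true_and] at *; first | (exfalso; omega) | ring1)


def TA (X : Matrix (Idx k) (Idx k) ℂ) (i j : Fin t) (p q : ℕ) : ℂ :=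
  (if q < k j then -ent X j i (k j + q) p else if q < 2*k j then ent X j i (q - k j) p else 0)
  + (if p < k i then ent X i j (k i + p) q else if p < 2*k i then -ent X i j (p - k i) q else 0)

def TB (X : Matrix (Idx k) (Idx k) ℂ) (i j : Fin t) (p q : ℕ) : ℂ :=
  (if q < k j then -ent X j i (k j + q + 1) p else if k j + 1 ≤ q then ent X j i (q - k j - 1) p else 0)
  + (if p < k i then ent X i j (k i + p + 1) q else if k i + 1 ≤ p then -ent X i j (p - k i - 1) q else 0)

lemma entry_A (X : Matrix (Idx k) (Idx k) ℂ) (i j : Fin t) (p : Fin (2*k i+1)) (q : Fin (2*k j+1)) :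
    (Xᵀ * AA k + AA k * X) ⟨i,p⟩ ⟨j,q⟩ = TA X i j p.1 q.1 := by
  have h1 : (Xᵀ * AA k) ⟨i,p⟩ ⟨j,q⟩
      = (if q.1 < k j then -ent X j i (k j + q.1) p.1
         else if q.1 < 2*k j then ent X j i (q.1 - k j) p.1 else 0) := by
    rw [Matrix.mul_apply]
    rw [← Finset.univ_sigma_univ, Finset.sum_sigma]
    rw [Finset.sum_eq_single j]
    · have : ∀ r : Fin (2*k j+1), Xᵀ ⟨i,p⟩ ⟨j,r⟩ * AA k ⟨j,r⟩ ⟨j,q⟩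
          = X ⟨j,r⟩ ⟨i,p⟩ * MA (k j) r q := by
        intro r
        rw [Matrix.transpose_apply]
        congr 1
        exact Matrix.blockDiagonal'_apply_eq _ _ _ _
      simp_rw [this]
      rw [colA (k j) q (fun r => X ⟨j,r⟩ ⟨i,p⟩)]
      split_ifs with hq1 hq2
      · rw [ent_eq _ _ _ _ _ (by omega) (by omega)]
      · rw [ent_eq _ _ _ _ _ (by omega) (by omega)]
      · rfl
    · intro b _ hb
      apply Finset.sum_eq_zero
      intro r _
      rw [Matrix.transpose_apply]
      have : AA k ⟨b,r⟩ ⟨j,q⟩ = 0 := Matrix.blockDiagonal'_apply_ne _ _ _ hb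
      rw [this, mul_zero]
    · intro h; exact absurd (Finset.mem_univ j) h
  have h2 : (AA k * X) ⟨i,p⟩ ⟨j,q⟩
      = (if p.1 < k i then ent X i j (k i + p.1) q.1
         else if p.1 < 2*k i then -ent X i j (p.1 - k i) q.1 else 0) := by
    rw [Matrix.mul_apply]
    rw [← Finset.univ_sigma_univ, Finset.sum_sigma]
    rw [Finset.sum_eq_single i]
    · have : ∀ r : Fin (2*k i+1), AA k ⟨i,p⟩ ⟨i,r⟩ * X ⟨i,r⟩ ⟨j,q⟩
          = MA (k i) p r * X ⟨i,r⟩ ⟨j,q⟩ := by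
        intro r
        congr 1
        exact Matrix.blockDiagonal'_apply_eq _ _ _ _
      simp_rw [this]
      rw [rowA (k i) p (fun r => X ⟨i,r⟩ ⟨j,q⟩)]
      split_ifs with hp1 hp2
      · rw [ent_eq _ _ _ _ _ (by omega) (by omega)]
      · rw [ent_eq _ _ _ _ _ (by omega) (by omega)]
      · rfl
    · intro b _ hb
      apply Finset.sum_eq_zero
      intro r _
      have : AA k ⟨i,p⟩ ⟨b,r⟩ = 0 := Matrix.blockDiagonal'_apply_ne _ _ _ (fun hh => hb hh.symm)
      rw [this, zero_mul]
    · intro h; exact absurd (Finset.mem_univ i) h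
  rw [Matrix.add_apply, h1, h2, TA]

lemma entry_B (X : Matrix (Idx k) (Idx k) ℂ) (i j : Fin t) (p : Fin (2*k i+1)) (q : Fin (2*k j+1)) :
    (Xᵀ * BB k + BB k * X) ⟨i,p⟩ ⟨j,q⟩ = TB X i j p.1 q.1 := by
  have h1 : (Xᵀ * BB k) ⟨i,p⟩ ⟨j,q⟩
      = (if q.1 < k j then -ent X j i (k j + q.1 + 1) p.1
         else if k j + 1 ≤ q.1 then ent X j i (q.1 - k j - 1) p.1 else 0) := by
    rw [Matrix.mul_apply]
    rw [← Finset.univ_sigma_univ, Finset.sum_sigma]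
    rw [Finset.sum_eq_single j]
    · have : ∀ r : Fin (2*k j+1), Xᵀ ⟨i,p⟩ ⟨j,r⟩ * BB k ⟨j,r⟩ ⟨j,q⟩
          = X ⟨j,r⟩ ⟨i,p⟩ * MB (k j) r q := by
        intro r
        rw [Matrix.transpose_apply]
        congr 1
        exact Matrix.blockDiagonal'_apply_eq _ _ _ _
      simp_rw [this]
      rw [colB (k j) q (fun r => X ⟨j,r⟩ ⟨i,p⟩)]
      split_ifs with hq1 hq2
      · rw [ent_eq _ _ _ _ _ (by omega) (by omega)]
      · rw [ent_eq _ _ _ _ _ (by omega) (by omega)]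
      · rfl
    · intro b _ hb
      apply Finset.sum_eq_zero
      intro r _
      rw [Matrix.transpose_apply]
      have : BB k ⟨b,r⟩ ⟨j,q⟩ = 0 := Matrix.blockDiagonal'_apply_ne _ _ _ hb
      rw [this, mul_zero]
    · intro h; exact absurd (Finset.mem_univ j) h
  have h2 : (BB k * X) ⟨i,p⟩ ⟨j,q⟩
      = (if p.1 < k i then ent X i j (k i + p.1 + 1) q.1
         else if k i + 1 ≤ p.1 then -ent X i j (p.1 - k i - 1) q.1 else 0) := by
    rw [Matrix.mul_apply]
    rw [← Finset.univ_sigma_univ, Finset.sum_sigma]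
    rw [Finset.sum_eq_single i]
    · have : ∀ r : Fin (2*k i+1), BB k ⟨i,p⟩ ⟨i,r⟩ * X ⟨i,r⟩ ⟨j,q⟩
          = MB (k i) p r * X ⟨i,r⟩ ⟨j,q⟩ := by
        intro r
        congr 1
        exact Matrix.blockDiagonal'_apply_eq _ _ _ _
      simp_rw [this]
      rw [rowB (k i) p (fun r => X ⟨i,r⟩ ⟨j,q⟩)]
      split_ifs with hp1 hp2
      · rw [ent_eq _ _ _ _ _ (by omega) (by omega)]
      · rw [ent_eq _ _ _ _ _ (by omega) (by omega)]
      · rfl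
    · intro b _ hb
      apply Finset.sum_eq_zero
      intro r _
      have : BB k ⟨i,p⟩ ⟨b,r⟩ = 0 := Matrix.blockDiagonal'_apply_ne _ _ _ (fun hh => hb hh.symm)
      rw [this, zero_mul]
    · intro h; exact absurd (Finset.mem_univ i) h
  rw [Matrix.add_apply, h1, h2, TB]


section Structural

variable {X : Matrix (Idx k) (Idx k) ℂ}
variable (hA : Xᵀ * AA k + AA k * X = 0) (hB : Xᵀ * BB k + BB k * X = 0)

include hA in
lemma eqA (i j : Fin t) (p q : ℕ) (hp : p < 2*k i+1) (hq : q < 2*k j+1) :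
    (if q < k j then -ent X j i (k j + q) p else if q < 2*k j then ent X j i (q - k j) p else 0)
    + (if p < k i then ent X i j (k i + p) q else if p < 2*k i then -ent X i j (p - k i) q else 0)
    = 0 := by
  have h := entry_A X i j ⟨p, hp⟩ ⟨q, hq⟩
  rw [hA] at h
  simp only [Matrix.zero_apply, TA] at h
  exact h.symm

include hB in
lemma eqB (i j : Fin t) (p q : ℕ) (hp : p < 2*k i+1) (hq : q < 2*k j+1) :
    (if q < k j then -ent X j i (k j + q + 1) p else if k j + 1 ≤ q then ent X j i (q - k j - 1) p else 0)
    + (if p < k i then ent X i j (k i + p + 1) q else if k i + 1 ≤ p then -ent X i j (p - k i - 1) q else 0)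
    = 0 := by
  have h := entry_B X i j ⟨p, hp⟩ ⟨q, hq⟩
  rw [hB] at h
  simp only [Matrix.zero_apply, TB] at h
  exact h.symm

-- X21 relations (top-top equations)
include hA in
lemma rel1 (i j : Fin t) (p q : ℕ) (hp : p < k i) (hq : q < k j) :
    ent X i j (k i + p) q = ent X j i (k j + q) p := by
  have h := eqA hA i j p q (by omega) (by omega)
  rw [if_pos hq, if_pos hp] at h
  linear_combination h

include hB in
lemma rel2 (i j : Fin t) (p q : ℕ) (hp : p < k i) (hq : q < k j) :
    ent X i j (k i + p + 1) q = ent X j i (k j + q + 1) p := by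
  have h := eqB hB i j p q (by omega) (by omega)
  rw [if_pos hq, if_pos hp] at h
  linear_combination h

-- X22/X11 relations (top-bottom equations)
include hA in
lemma q1 (i j : Fin t) (p b : ℕ) (hp : p < k i) (hb : b ≤ k j) :
    ent X i j (k i + p) (k j + b)
      + (if b < k j then ent X j i b p else 0) = 0 := by
  have h := eqA hA i j p (k j + b) (by omega) (by omega)
  rw [if_neg (show ¬ (k j + b < k j) by omega), if_pos hp] at h
  by_cases hb' : b < k j
  · rw [if_pos (by omega : k j + b < 2 * k j)] at h
    rw [if_pos hb']
    have e : k j + b - k j = b := by omega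
    rw [e] at h
    linear_combination h
  · rw [if_neg (by omega : ¬ (k j + b < 2 * k j))] at h
    rw [if_neg hb']
    linear_combination h

include hB in
lemma q2 (i j : Fin t) (p b : ℕ) (hp : p < k i) (hb : b ≤ k j) :
    ent X i j (k i + p + 1) (k j + b)
      + (if 1 ≤ b then ent X j i (b - 1) p else 0) = 0 := by
  have h := eqB hB i j p (k j + b) (by omega) (by omega)
  rw [if_neg (show ¬ (k j + b < k j) by omega), if_pos hp] at h
  by_cases hb' : 1 ≤ b
  · rw [if_pos (by omega : k j + 1 ≤ k j + b)] at h
    rw [if_pos hb']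
    have e : k j + b - k j - 1 = b - 1 := by omega
    rw [e] at h
    linear_combination h
  · rw [if_neg (by omega : ¬ (k j + 1 ≤ k j + b))] at h
    rw [if_neg hb']
    linear_combination h

-- X12 entries vanish
include hA hB in
lemma x12zero : ∀ a, ∀ (i j : Fin t) (b : ℕ), a < k i → b ≤ k j →
    ent X i j a (k j + b) = 0 := by
  intro a
  induction a using Nat.strong_induction_on with
  | _ a IH =>
    intro i j b ha hb
    have h := eqA hA i j (k i + a) (k j + b) (by omega) (by omega)
    rw [if_neg (show ¬ (k j + b < k j) by omega), if_neg (show ¬ (k i + a < k i) by omega),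
      if_pos (show k i + a < 2 * k i by omega)] at h
    have e : k i + a - k i = a := by omega
    rw [e] at h
    by_cases hb' : k j + b < 2 * k j
    · -- b < k j
      have e2 : k j + b - k j = b := by omega
      rw [if_pos hb', e2] at h
      -- ent X i j a (k j + b) = ent X j i b (k i + a)
      have step1 : ent X i j a (k j + b) = ent X j i b (k i + a) := by linear_combination -h
      have h2 := eqB hB j i (k j + b + 1) (k i + a) (by omega) (by omega)
      rw [if_neg (show ¬ (k i + a < k i) by omega), if_neg (show ¬ (k j + b + 1 < k j) by omega),
        if_pos (show k j + 1 ≤ k j + b + 1 by omega)] at h2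
      have e3 : k j + b + 1 - k j - 1 = b := by omega
      rw [e3] at h2
      by_cases ha' : k i + 1 ≤ k i + a
      · have e4 : k i + a - k i - 1 = a - 1 := by omega
        rw [if_pos ha', e4] at h2
        have step2 : ent X j i b (k i + a) = ent X i j (a-1) (k j + (b+1)) := by
          have e5 : k j + b + 1 = k j + (b + 1) := by omega
          rw [e5] at h2
          linear_combination -h2
        rw [step1, step2]
        exact IH (a-1) (by omega) i j (b+1) (by omega) (by omega)
      · rw [if_neg ha'] at h2
        rw [step1]
        linear_combination -h2
    · rw [if_neg hb'] at h
      linear_combination -h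

-- Toeplitz relation for X22
include hA hB in
lemma toep (i j : Fin t) (a b : ℕ) (ha : a < k i) (hb1 : 1 ≤ b) (hb : b ≤ k j) :
    ent X i j (k i + a + 1) (k j + b) = ent X i j (k i + a) (k j + (b - 1)) := by
  have h2 := q2 hB i j a b ha hb
  rw [if_pos hb1] at h2
  have h1 := q1 hA i j a (b-1) ha (by omega)
  rw [if_pos (by omega : b - 1 < k j)] at h1
  linear_combination h2 - h1

include hA in
lemma zlast (i j : Fin t) (a : ℕ) (ha : a < k i) :
    ent X i j (k i + a) (k j + k j) = 0 := by
  have h := q1 hA i j a (k j) ha (le_refl _)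
  rw [if_neg (show ¬ (k j < k j) by omega)] at h
  linear_combination h

include hB in
lemma zfirst (i j : Fin t) (a : ℕ) (ha : a < k i) :
    ent X i j (k i + a + 1) (k j + 0) = 0 := by
  have h := q2 hB i j a 0 ha (by omega)
  rw [if_neg (show ¬ (1 ≤ 0) by omega)] at h
  linear_combination h

include hA in
lemma x11 (i j : Fin t) (p q : ℕ) (hp : p < k i) (hq : q < k j) :
    ent X i j p q = -ent X j i (k j + q) (k i + p) := by
  have h := q1 hA j i q p hq (le_of_lt hp)
  rw [if_pos hp] at h
  linear_combination h

include hA hB in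
lemma zhigh : ∀ c (i j : Fin t) (a b : ℕ), a ≤ k i → b ≤ k j → a + k j < b + k i →
    k j - b = c → ent X i j (k i + a) (k j + b) = 0 := by
  intro c
  induction c with
  | zero =>
    intro i j a b ha hb hband hc
    have hbkj : b = k j := by omega
    subst hbkj
    exact zlast hA i j a (by omega)
  | succ c IH =>
    intro i j a b ha hb hband hc
    have hb' : b < k j := by omega
    have ha' : a < k i := by omega
    have step := toep hA hB i j a (b+1) ha' (by omega) (by omega)
    have e : b + 1 - 1 = b := by omega
    rw [e] at step
    rw [← step]
    exact IH i j (a+1) (b+1) (by omega) (by omega) (by omega) (by omega)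

include hA hB in
lemma zlow : ∀ b (i j : Fin t) (a : ℕ), b < a → a ≤ k i → b ≤ k j →
    ent X i j (k i + a) (k j + b) = 0 := by
  intro b
  induction b with
  | zero =>
    intro i j a hba ha hb
    obtain ⟨a', rfl⟩ : ∃ a', a = a' + 1 := ⟨a - 1, by omega⟩
    have : k i + (a' + 1) = k i + a' + 1 := by omega
    rw [this]
    exact zfirst hB i j a' (by omega)
  | succ b IH =>
    intro i j a hba ha hb
    obtain ⟨a', rfl⟩ : ∃ a', a = a' + 1 := ⟨a - 1, by omega⟩
    have step := toep hA hB i j a' (b+1) (by omega) (by omega) (by omega)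
    have e : k i + (a' + 1) = k i + a' + 1 := by omega
    have e2 : b + 1 - 1 = b := by omega
    rw [e, step, e2]
    exact IH i j a' (by omega) (by omega) (by omega)

include hA hB in
lemma cdiag : ∀ a (i j : Fin t) (b : ℕ), a ≤ b → b + k i ≤ a + k j → a ≤ k i → b ≤ k j →
    ent X i j (k i + a) (k j + b) = ent X i j (k i) (k j + (b - a)) := by
  intro a
  induction a with
  | zero =>
    intro i j b _ _ _ _
    norm_num
  | succ a IH =>
    intro i j b hab hband ha hb
    have step := toep hA hB i j a b (by omega) (by omega) hb
    have e : k i + (a + 1) = k i + a + 1 := by omega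
    rw [e, step]
    have := IH i j (b-1) (by omega) (by omega) (by omega) (by omega)
    rw [this]
    have e2 : b - 1 - a = b - (a+1) := by omega
    rw [e2]

include hA hB in
lemma x22canon (i j : Fin t) (a b : ℕ) (ha : a ≤ k i) (hb : b ≤ k j) :
    ent X i j (k i + a) (k j + b) =
      if a ≤ b ∧ b + k i ≤ a + k j then ent X i j (k i) (k j + (b - a)) else 0 := by
  split_ifs with h
  · exact cdiag hA hB a i j b h.1 h.2 ha hb
  · rcases Nat.lt_or_ge b a with hlt | hge
    · exact zlow hA hB b i j a hlt ha hb
    · have : a + k j < b + k i := by omega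
      exact zhigh hA hB (k j - b) i j a b ha hb this rfl

-- X21: sliding along anti-diagonals inside one block
include hA hB in
lemma slide (i j : Fin t) (a b : ℕ) (ha1 : 1 ≤ a) (ha : a ≤ k i) (hb : b + 1 < k j) :
    ent X i j (k i + a) b = ent X i j (k i + (a - 1)) (b + 1) := by
  have h2 := rel2 hB i j (a-1) b (by omega) (by omega)
  have e : k i + (a - 1) + 1 = k i + a := by omega
  have e' : k j + b + 1 = k j + (b + 1) := by omega
  rw [e, e'] at h2
  have h1 := rel1 hA i j (a-1) (b+1) (by omega) hb
  rw [h2, ← h1]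

include hA hB in
lemma hank : ∀ c (i j : Fin t) (a b : ℕ), a + c ≤ k i → b + c < k j →
    ent X i j (k i + (a + c)) b = ent X i j (k i + a) (b + c) := by
  intro c
  induction c with
  | zero => intro i j a b _ _; rfl
  | succ c IH =>
    intro i j a b hac hbc
    have step := slide hA hB i j (a + c + 1) b (by omega) (by omega) (by omega)
    have e : a + (c+1) = a + c + 1 := by omega
    have e2 : a + c + 1 - 1 = a + c := by omega
    rw [e, step, e2]
    have := IH i j a (b+1) (by omega) (by omega)
    rw [this]
    have e3 : b + 1 + c = b + (c+1) := by omega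
    rw [e3]

include hA hB in
lemma canon_same (u v : Fin t) (a b : ℕ) (ha : a ≤ k u) (hb : b < k v) :
    ent X u v (k u + a) b =
      ent X u v (k u + ((a+b) - min (a+b) (k v - 1))) (min (a+b) (k v - 1)) := by
  set m := min (a+b) (k v - 1) with hm
  have hbm : b ≤ m := by omega
  have h := hank hA hB (m - b) u v ((a+b) - m) b (by omega) (by omega)
  have e : (a+b) - m + (m - b) = a := by omega
  have e2 : b + (m - b) = m := by omega
  rw [e, e2] at h
  exact h
end Structural



variable {t : ℕ} {k : Fin t → ℕ}

section Canon
variable {X : Matrix (Idx k) (Idx k) ℂ}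

/-- designated representative entry of the `X21` anti-diagonal `σ` for the pair `{i,j}`. -/
def dsgn (X : Matrix (Idx k) (Idx k) ℂ) (i j : Fin t) (σ : ℕ) : ℂ :=
  if i ≤ j then ent X j i (k j + (σ - min σ (k i - 1))) (min σ (k i - 1))
  else ent X i j (k i + (σ - min σ (k j - 1))) (min σ (k j - 1))

lemma x21canon (hA : Xᵀ * AA k + AA k * X = 0) (hB : Xᵀ * BB k + BB k * X = 0)
    (hmon : ∀ u v : Fin t, u ≤ v → k v ≤ k u)
    (i j : Fin t) (a b : ℕ) (ha : a ≤ k i) (hb : b < k j) :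
    ent X i j (k i + a) b = dsgn X i j (a + b) := by
  unfold dsgn
  by_cases hij : i ≤ j
  · rw [if_pos hij]
    have hki : k j ≤ k i := hmon i j hij
    have hki1 : 1 ≤ k i := by omega
    by_cases ha' : a < k i
    · rw [rel1 hA i j a b ha' hb]
      have h := canon_same hA hB j i b a (by omega) (by omega)
      rw [h]
      have e : b + a = a + b := by omega
      rw [e]
    · have haki : a = k i := by omega
      have h2 := rel2 hB i j (a-1) b (by omega) hb
      have e : k i + (a-1) + 1 = k i + a := by omega
      have e' : k j + b + 1 = k j + (b+1) := by omega
      rw [e, e'] at h2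
      rw [h2]
      have h := canon_same hA hB j i (b+1) (a-1) (by omega) (by omega)
      rw [h]
      have e2 : b + 1 + (a - 1) = a + b := by omega
      rw [e2]
  · rw [if_neg hij]
    exact canon_same hA hB i j a b ha hb
end Canon

def W1 (k : Fin t → ℕ) (p : Fin t × Fin t) : ℕ := if p.1 ≤ p.2 then k p.1 + k p.2 else 0
def W2 (k : Fin t → ℕ) (p : Fin t × Fin t) : ℕ := k p.2 + 1 - k p.1

abbrev Par (k : Fin t → ℕ) :=
  ((p : Fin t × Fin t) → Fin (W1 k p) → ℂ) × ((p : Fin t × Fin t) → Fin (W2 k p) → ℂ)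

def v11 (x : Par k) (i j : Fin t) (p q : ℕ) : ℂ :=
  if h : q ≤ p ∧ p + k j ≤ q + k i then
    -(x.2 (j,i) ⟨p - q, by show p - q < W2 k (j,i); show p - q < k i + 1 - k j; omega⟩)
  else 0

def v21 (x : Par k) (i j : Fin t) (a b : ℕ) : ℂ :=
  if hij : i ≤ j then
    (if hb : a + b < W1 k (i,j) then x.1 (i,j) ⟨a + b, hb⟩ else 0)
  else
    (if hb : a + b < W1 k (j,i) then x.1 (j,i) ⟨a + b, hb⟩ else 0)

def v22 (x : Par k) (i j : Fin t) (a b : ℕ) : ℂ :=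
  if h : a ≤ b ∧ b + k i ≤ a + k j then
    x.2 (i,j) ⟨b - a, by show b - a < W2 k (i,j); show b - a < k j + 1 - k i; omega⟩
  else 0

def psiEnt (x : Par k) (i j : Fin t) (p q : ℕ) : ℂ :=
  if p < k i then
    (if q < k j then v11 x i j p q else 0)
  else
    (if q < k j then v21 x i j (p - k i) q else v22 x i j (p - k i) (q - k j))

def psi (x : Par k) : Matrix (Idx k) (Idx k) ℂ :=
  Matrix.of fun u v => psiEnt x u.1 v.1 u.2.1 v.2.1

lemma psient (x : Par k) (i j : Fin t) (p q : ℕ)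
    (hp : p < 2*k i + 1) (hq : q < 2*k j + 1) :
    ent (psi x) i j p q = psiEnt x i j p q := by
  rw [ent_eq _ _ _ _ _ hp hq]; rfl

-- v-lemmas
lemma L1 (x : Par k) (i j : Fin t) (a b a' b' : ℕ) (h : a + b = a' + b') :
    v21 x i j a b = v21 x j i a' b' := by
  unfold v21
  rcases eq_or_ne i j with rfl | hne
  · simp only [le_refl, dif_pos]
    rw [h]
  · by_cases hij : i ≤ j
    · have hji : ¬ (j ≤ i) := fun hh => hne (le_antisymm hij hh)
      rw [dif_pos hij, dif_neg hji]
      rw [h]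
    · have hji : j ≤ i := le_of_not_ge hij
      rw [dif_neg hij, dif_pos hji]
      rw [h]

lemma L2 (x : Par k) (u v : Fin t) (a b : ℕ) :
    v11 x u v b a = -(v22 x v u a b) := by
  unfold v11 v22
  by_cases h : a ≤ b ∧ b + k v ≤ a + k u
  · rw [dif_pos h, dif_pos h]
  · rw [dif_neg h, dif_neg h, neg_zero]

lemma L3 (x : Par k) (u v : Fin t) (p b : ℕ) (hb : 1 ≤ b) :
    v11 x u v (b-1) p = -(v22 x v u (p+1) b) := by
  unfold v11 v22
  by_cases h : p ≤ b - 1 ∧ (b-1) + k v ≤ p + k u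
  · rw [dif_pos h, dif_pos (show p + 1 ≤ b ∧ b + k v ≤ p + 1 + k u by omega)]
    have e : b - 1 - p = b - (p + 1) := by omega
    congr 2
    exact congrArg _ (Fin.ext e)
  · rw [dif_neg h, dif_neg (show ¬ (p + 1 ≤ b ∧ b + k v ≤ p + 1 + k u) by omega), neg_zero]

lemma L4 (x : Par k) (u v : Fin t) (c : ℕ) :
    v22 x u v (c+1) 0 = 0 := by
  unfold v22
  rw [dif_neg (show ¬ (c + 1 ≤ 0 ∧ 0 + k u ≤ c + 1 + k v) by omega)]

lemma L5 (x : Par k) (u v : Fin t) (c : ℕ) (hc : c < k u) :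
    v22 x u v c (k v) = 0 := by
  unfold v22
  rw [dif_neg (show ¬ (c ≤ k v ∧ k v + k u ≤ c + k v) by omega)]


variable {t : ℕ} {k : Fin t → ℕ}

lemma pTT (x : Par k) (i j : Fin t) (a q : ℕ) (hq : q < k j) :
    psiEnt x i j (k i + a) q = v21 x i j a q := by
  simp only [psiEnt]
  rw [if_neg (show ¬ (k i + a < k i) by omega), if_pos hq]
  have e : k i + a - k i = a := by omega
  rw [e]

lemma pTB2 (x : Par k) (i j : Fin t) (a q : ℕ) (hq : k j ≤ q) :
    psiEnt x i j (k i + a) q = v22 x i j a (q - k j) := by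
  simp only [psiEnt]
  rw [if_neg (show ¬ (k i + a < k i) by omega), if_neg (show ¬ (q < k j) by omega)]
  have e : k i + a - k i = a := by omega
  rw [e]

lemma pT0 (x : Par k) (i j : Fin t) (p q : ℕ) (hp : p < k i) (hq : q < k j) :
    psiEnt x i j p q = v11 x i j p q := by
  simp only [psiEnt]
  rw [if_pos hp, if_pos hq]

lemma p12 (x : Par k) (i j : Fin t) (p q : ℕ) (hp : p < k i) (hq : k j ≤ q) :
    psiEnt x i j p q = 0 := by
  simp only [psiEnt]
  rw [if_pos hp, if_neg (show ¬ (q < k j) by omega)]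

lemma psiA (x : Par k) : (psi x)ᵀ * AA k + AA k * psi x = 0 := by
  ext ⟨i, pp⟩ ⟨j, qq⟩
  rw [entry_A]
  simp only [Matrix.zero_apply, TA]
  by_cases hq1 : qq.1 < k j
  · rw [if_pos hq1]
    by_cases hp1 : pp.1 < k i
    · rw [if_pos hp1]
      rw [psient x j i (k j + qq.1) pp.1 (by omega) (by omega)]
      rw [psient x i j (k i + pp.1) qq.1 (by omega) (by omega)]
      rw [pTT x j i qq.1 pp.1 hp1, pTT x i j pp.1 qq.1 hq1]
      rw [L1 x i j pp.1 qq.1 qq.1 pp.1 (by omega)]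
      ring
    · by_cases hp2 : pp.1 < 2*k i
      · rw [if_neg hp1, if_pos hp2]
        rw [psient x j i (k j + qq.1) pp.1 (by omega) (by omega)]
        rw [psient x i j (pp.1 - k i) qq.1 (by omega) (by omega)]
        rw [pTB2 x j i qq.1 pp.1 (by omega)]
        rw [pT0 x i j (pp.1 - k i) qq.1 (by omega) hq1]
        rw [L2 x i j qq.1 (pp.1 - k i)]
        ring
      · rw [if_neg hp1, if_neg hp2]
        rw [psient x j i (k j + qq.1) pp.1 (by omega) (by omega)]
        rw [pTB2 x j i qq.1 pp.1 (by omega)]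
        have e : pp.1 - k i = k i := by omega
        rw [e, L5 x j i qq.1 hq1]
        ring
  · by_cases hq2 : qq.1 < 2*k j
    · rw [if_neg hq1, if_pos hq2]
      by_cases hp1 : pp.1 < k i
      · rw [if_pos hp1]
        rw [psient x j i (qq.1 - k j) pp.1 (by omega) (by omega)]
        rw [psient x i j (k i + pp.1) qq.1 (by omega) (by omega)]
        rw [pT0 x j i (qq.1 - k j) pp.1 (by omega) hp1]
        rw [pTB2 x i j pp.1 qq.1 (by omega)]
        rw [L2 x j i pp.1 (qq.1 - k j)]
        ring
      · by_cases hp2 : pp.1 < 2*k i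
        · rw [if_neg hp1, if_pos hp2]
          rw [psient x j i (qq.1 - k j) pp.1 (by omega) (by omega)]
          rw [psient x i j (pp.1 - k i) qq.1 (by omega) (by omega)]
          rw [p12 x j i (qq.1 - k j) pp.1 (by omega) (by omega)]
          rw [p12 x i j (pp.1 - k i) qq.1 (by omega) (by omega)]
          ring
        · rw [if_neg hp1, if_neg hp2]
          rw [psient x j i (qq.1 - k j) pp.1 (by omega) (by omega)]
          rw [p12 x j i (qq.1 - k j) pp.1 (by omega) (by omega)]
          ring
    · rw [if_neg hq1, if_neg hq2]
      by_cases hp1 : pp.1 < k i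
      · rw [if_pos hp1]
        rw [psient x i j (k i + pp.1) qq.1 (by omega) (by omega)]
        rw [pTB2 x i j pp.1 qq.1 (by omega)]
        have e : qq.1 - k j = k j := by omega
        rw [e, L5 x i j pp.1 hp1]
        ring
      · by_cases hp2 : pp.1 < 2*k i
        · rw [if_neg hp1, if_pos hp2]
          rw [psient x i j (pp.1 - k i) qq.1 (by omega) (by omega)]
          rw [p12 x i j (pp.1 - k i) qq.1 (by omega) (by omega)]
          ring
        · rw [if_neg hp1, if_neg hp2]
          ring

lemma psiB (x : Par k) : (psi x)ᵀ * BB k + BB k * psi x = 0 := by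
  ext ⟨i, pp⟩ ⟨j, qq⟩
  rw [entry_B]
  simp only [Matrix.zero_apply, TB]
  by_cases hq1 : qq.1 < k j
  · rw [if_pos hq1]
    by_cases hp1 : pp.1 < k i
    · rw [if_pos hp1]
      have e1 : k j + qq.1 + 1 = k j + (qq.1 + 1) := by omega
      have e2 : k i + pp.1 + 1 = k i + (pp.1 + 1) := by omega
      rw [e1, e2]
      rw [psient x j i (k j + (qq.1+1)) pp.1 (by omega) (by omega)]
      rw [psient x i j (k i + (pp.1+1)) qq.1 (by omega) (by omega)]
      rw [pTT x j i (qq.1+1) pp.1 hp1, pTT x i j (pp.1+1) qq.1 hq1]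
      rw [L1 x i j (pp.1+1) qq.1 (qq.1+1) pp.1 (by omega)]
      ring
    · by_cases hp2 : k i + 1 ≤ pp.1
      · rw [if_neg hp1, if_pos hp2]
        have e1 : k j + qq.1 + 1 = k j + (qq.1 + 1) := by omega
        rw [e1]
        rw [psient x j i (k j + (qq.1+1)) pp.1 (by omega) (by omega)]
        rw [psient x i j (pp.1 - k i - 1) qq.1 (by omega) (by omega)]
        rw [pTB2 x j i (qq.1+1) pp.1 (by omega)]
        rw [pT0 x i j (pp.1 - k i - 1) qq.1 (by omega) hq1]
        have e2 : pp.1 - k i - 1 = (pp.1 - k i) - 1 := by omega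
        rw [e2, L3 x i j qq.1 (pp.1 - k i) (by omega)]
        ring
      · rw [if_neg hp1, if_neg hp2]
        have e1 : k j + qq.1 + 1 = k j + (qq.1 + 1) := by omega
        rw [e1]
        rw [psient x j i (k j + (qq.1+1)) pp.1 (by omega) (by omega)]
        rw [pTB2 x j i (qq.1+1) pp.1 (by omega)]
        have e : pp.1 - k i = 0 := by omega
        rw [e, L4 x j i qq.1]
        ring
  · rw [if_neg hq1]
    by_cases hq2 : k j + 1 ≤ qq.1
    · rw [if_pos hq2]
      by_cases hp1 : pp.1 < k i
      · rw [if_pos hp1]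
        have e2 : k i + pp.1 + 1 = k i + (pp.1 + 1) := by omega
        rw [e2]
        rw [psient x j i (qq.1 - k j - 1) pp.1 (by omega) (by omega)]
        rw [psient x i j (k i + (pp.1+1)) qq.1 (by omega) (by omega)]
        rw [pT0 x j i (qq.1 - k j - 1) pp.1 (by omega) hp1]
        rw [pTB2 x i j (pp.1+1) qq.1 (by omega)]
        have e3 : qq.1 - k j - 1 = (qq.1 - k j) - 1 := by omega
        rw [e3, L3 x j i pp.1 (qq.1 - k j) (by omega)]
        ring
      · by_cases hp2 : k i + 1 ≤ pp.1
        · rw [if_neg hp1, if_pos hp2]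
          rw [psient x j i (qq.1 - k j - 1) pp.1 (by omega) (by omega)]
          rw [psient x i j (pp.1 - k i - 1) qq.1 (by omega) (by omega)]
          rw [p12 x j i (qq.1 - k j - 1) pp.1 (by omega) (by omega)]
          rw [p12 x i j (pp.1 - k i - 1) qq.1 (by omega) (by omega)]
          ring
        · rw [if_neg hp1, if_neg hp2]
          rw [psient x j i (qq.1 - k j - 1) pp.1 (by omega) (by omega)]
          rw [p12 x j i (qq.1 - k j - 1) pp.1 (by omega) (by omega)]
          ring
    · rw [if_neg hq2]
      by_cases hp1 : pp.1 < k i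
      · rw [if_pos hp1]
        have e2 : k i + pp.1 + 1 = k i + (pp.1 + 1) := by omega
        rw [e2]
        rw [psient x i j (k i + (pp.1+1)) qq.1 (by omega) (by omega)]
        rw [pTB2 x i j (pp.1+1) qq.1 (by omega)]
        have e : qq.1 - k j = 0 := by omega
        rw [e, L4 x i j pp.1]
        ring
      · by_cases hp2 : k i + 1 ≤ pp.1
        · rw [if_neg hp1, if_pos hp2]
          rw [psient x i j (pp.1 - k i - 1) qq.1 (by omega) (by omega)]
          rw [p12 x i j (pp.1 - k i - 1) qq.1 (by omega) (by omega)]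
          ring
        · rw [if_neg hp1, if_neg hp2]
          ring

variable {t : ℕ} {k : Fin t → ℕ}

lemma ent_add (X Y : Matrix (Idx k) (Idx k) ℂ) (i j : Fin t) (p q : ℕ) :
    ent (X + Y) i j p q = ent X i j p q + ent Y i j p q := by
  unfold ent
  split_ifs with h
  · rfl
  · ring

lemma ent_smul (c : ℂ) (X : Matrix (Idx k) (Idx k) ℂ) (i j : Fin t) (p q : ℕ) :
    ent (c • X) i j p q = c * ent X i j p q := by
  unfold ent
  split_ifs with h
  · rfl
  · ring

def readH (X : Matrix (Idx k) (Idx k) ℂ) (p : Fin t × Fin t) (σ : Fin (W1 k p)) : ℂ :=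
  if hij : p.1 ≤ p.2 then
    ent X p.2 p.1 (k p.2 + (σ.1 - min σ.1 (k p.1 - 1))) (min σ.1 (k p.1 - 1))
  else 0

def readC (X : Matrix (Idx k) (Idx k) ℂ) (p : Fin t × Fin t) (d : Fin (W2 k p)) : ℂ :=
  ent X p.1 p.2 (k p.1) (k p.2 + d.1)

def ReadL (k : Fin t → ℕ) : Matrix (Idx k) (Idx k) ℂ →ₗ[ℂ] Par k where
  toFun X := (readH X, readC X)
  map_add' X Y := by
    refine Prod.ext ?_ ?_ <;> funext p z <;>
      simp only [readH, readC, Prod.fst_add, Prod.snd_add, Pi.add_apply, ent_add]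
    split_ifs <;> simp
  map_smul' c X := by
    refine Prod.ext ?_ ?_ <;> funext p z <;>
      simp only [readH, readC, Prod.smul_fst, Prod.smul_snd, Pi.smul_apply, ent_smul,
        smul_eq_mul, RingHom.id_apply]
    split_ifs <;> simp

lemma read_psi (hmon : ∀ u v : Fin t, u ≤ v → k v ≤ k u) (x : Par k) :
    ReadL k (psi x) = x := by
  refine Prod.ext ?_ ?_
  · funext p σ
    obtain ⟨i0, j0⟩ := p
    show readH (psi x) (i0, j0) σ = x.1 (i0, j0) σ
    unfold readH
    by_cases hij : i0 ≤ j0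
    swap
    · exact absurd σ.isLt (by simp [W1, hij])
    rw [dif_pos hij]
    have hσ' : σ.1 < k i0 + k j0 := by
      have h := σ.isLt
      simpa [W1, hij] using h
    have hk : k j0 ≤ k i0 := hmon _ _ hij
    have hk1 : 1 ≤ k i0 := by omega
    set m := min σ.1 (k i0 - 1) with hm
    have hm1 : m ≤ k i0 - 1 := min_le_right _ _
    have hm2 : m ≤ σ.1 := min_le_left _ _
    have hm3 : σ.1 - m ≤ k j0 := by omega
    rw [psient x j0 i0 (k j0 + (σ.1 - m)) m (by omega) (by omega)]
    rw [pTT x j0 i0 (σ.1 - m) m (by omega)]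
    unfold v21
    have he : σ.1 - m + m = σ.1 := by omega
    by_cases hji : j0 ≤ i0
    · have heq : i0 = j0 := le_antisymm hij hji
      subst heq
      rw [dif_pos hji]
      rw [dif_pos (show σ.1 - m + m < W1 k (i0, i0) by rw [he]; exact σ.isLt)]
      exact congrArg _ (Fin.ext he)
    · rw [dif_neg hji]
      rw [dif_pos (show σ.1 - m + m < W1 k (i0, j0) by rw [he]; exact σ.isLt)]
      exact congrArg _ (Fin.ext he)
  · funext p d
    obtain ⟨i0, j0⟩ := p
    show readC (psi x) (i0, j0) d = x.2 (i0, j0) d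
    unfold readC
    have hd' : d.1 < k j0 + 1 - k i0 := d.isLt
    rw [psient x i0 j0 (k i0) (k j0 + d.1) (by omega) (by omega)]
    have h := pTB2 x i0 j0 0 (k j0 + d.1) (by omega)
    rw [Nat.add_zero] at h
    rw [h]
    unfold v22
    rw [dif_pos (show 0 ≤ k j0 + d.1 - k j0 ∧ (k j0 + d.1 - k j0) + k i0 ≤ 0 + k j0 by omega)]
    exact congrArg _ (Fin.ext (show k j0 + d.1 - k j0 - 0 = d.1 by omega))

lemma psi_read {X : Matrix (Idx k) (Idx k) ℂ}
    (hA : Xᵀ * AA k + AA k * X = 0) (hB : Xᵀ * BB k + BB k * X = 0)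
    (hmon : ∀ u v : Fin t, u ≤ v → k v ≤ k u) :
    psi (ReadL k X) = X := by
  ext ⟨i, pp⟩ ⟨j, qq⟩
  have hrhs : X ⟨i, pp⟩ ⟨j, qq⟩ = ent X i j pp.1 qq.1 :=
    (ent_eq X i j pp.1 qq.1 pp.2 qq.2).symm
  show psiEnt (ReadL k X) i j pp.1 qq.1 = X ⟨i, pp⟩ ⟨j, qq⟩
  rw [hrhs]
  by_cases hp1 : pp.1 < k i
  · by_cases hq1 : qq.1 < k j
    · -- X11
      rw [pT0 _ i j pp.1 qq.1 hp1 hq1]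
      have hx : ent X i j pp.1 qq.1 = -ent X j i (k j + qq.1) (k i + pp.1) :=
        x11 hA i j pp.1 qq.1 hp1 hq1
      rw [hx, x22canon hA hB j i qq.1 pp.1 (by omega) (by omega)]
      unfold v11
      split_ifs with h
      · show -(readC X (j,i) _) = _
        unfold readC
        rfl
      · ring
    · -- X12
      rw [p12 _ i j pp.1 qq.1 hp1 (by omega)]
      have h0 := x12zero hA hB pp.1 i j (qq.1 - k j) hp1 (by omega)
      have e : k j + (qq.1 - k j) = qq.1 := by omega
      rw [e] at h0
      rw [h0]
  · by_cases hq1 : qq.1 < k j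
    · -- X21
      have h := pTT (ReadL k X) i j (pp.1 - k i) qq.1 hq1
      have e : k i + (pp.1 - k i) = pp.1 := by omega
      rw [e] at h
      rw [h]
      have hx := x21canon hA hB hmon i j (pp.1 - k i) qq.1 (by omega) hq1
      rw [e] at hx
      rw [hx]
      unfold dsgn v21
      set σ : ℕ := pp.1 - k i + qq.1 with hσdef
      by_cases hij : i ≤ j
      · rw [if_pos hij, dif_pos hij]
        have hw : σ < W1 k (i, j) := by
          show σ < if (i,j).1 ≤ (i,j).2 then k (i,j).1 + k (i,j).2 else 0
          simp only [if_pos hij]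
          omega
        rw [dif_pos hw]
        show readH X (i,j) _ = _
        unfold readH
        rw [dif_pos hij]
      · rw [if_neg hij, dif_neg hij]
        have hji : j ≤ i := le_of_not_ge hij
        have hw : σ < W1 k (j, i) := by
          show σ < if (j,i).1 ≤ (j,i).2 then k (j,i).1 + k (j,i).2 else 0
          simp only [if_pos hji]
          omega
        rw [dif_pos hw]
        show readH X (j,i) _ = _
        unfold readH
        rw [dif_pos hji]
    · -- X22
      have h := pTB2 (ReadL k X) i j (pp.1 - k i) qq.1 (by omega)
      have e : k i + (pp.1 - k i) = pp.1 := by omega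
      rw [e] at h
      rw [h]
      have hx := x22canon hA hB i j (pp.1 - k i) (qq.1 - k j) (by omega) (by omega)
      have e2 : k j + (qq.1 - k j) = qq.1 := by omega
      rw [e, e2] at hx
      rw [hx]
      unfold v22
      split_ifs with hcond
      · show readC X (i,j) _ = _
        unfold readC
        rfl
      · rfl

variable {t : ℕ} {k : Fin t → ℕ}

lemma psi0 : psi (0 : Par k) = 0 := by
  ext u v
  show psiEnt (0 : Par k) u.1 v.1 u.2.1 v.2.1 = 0
  unfold psiEnt v11 v21 v22
  split_ifs <;> simp <;> rfl

def congT {p : Type*} [Fintype p] (A B : Matrix p p ℂ) :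
    Matrix p p ℂ →ₗ[ℂ] Matrix p p ℂ × Matrix p p ℂ where
  toFun X := (Xᵀ * A + A * X, Xᵀ * B + B * X)
  map_add' X Y := by
    simp only [Matrix.transpose_add, Matrix.add_mul, Matrix.mul_add, Prod.mk_add_mk,
      Prod.mk.injEq]
    constructor <;> abel
  map_smul' c X := by
    simp only [Matrix.transpose_smul, Matrix.smul_mul, Matrix.mul_smul, smul_add,
      RingHom.id_apply, Prod.smul_mk]

lemma mem_ker_congT {X : Matrix (Idx k) (Idx k) ℂ} :
    X ∈ LinearMap.ker (congT (AA k) (BB k)) ↔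
      (Xᵀ * AA k + AA k * X = 0 ∧ Xᵀ * BB k + BB k * X = 0) := by
  rw [LinearMap.mem_ker]
  constructor
  · intro h
    exact ⟨congrArg Prod.fst h, congrArg Prod.snd h⟩
  · intro ⟨h1, h2⟩
    show (_, _) = (0 : _ × _)
    rw [Prod.mk.injEq]
    exact ⟨h1, h2⟩

lemma ker_dim (hmon : ∀ u v : Fin t, u ≤ v → k v ≤ k u) :
    Module.finrank ℂ (LinearMap.ker (congT (AA k) (BB k))) = Module.finrank ℂ (Par k) := by
  have hLbij : Function.Bijective
      ((ReadL k).comp (LinearMap.ker (congT (AA k) (BB k))).subtype) := by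
    constructor
    · rw [← LinearMap.ker_eq_bot]
      rw [Submodule.eq_bot_iff]
      rintro ⟨X, hX⟩ hz
      rw [mem_ker_congT] at hX
      have hz' : ReadL k X = 0 := hz
      have : X = psi (ReadL k X) := (psi_read hX.1 hX.2 hmon).symm
      rw [hz', psi0] at this
      exact Subtype.ext this
    · intro x
      refine ⟨⟨psi x, mem_ker_congT.mpr ⟨psiA x, psiB x⟩⟩, ?_⟩
      exact read_psi hmon x
  exact LinearEquiv.finrank_eq (LinearEquiv.ofBijective _ hLbij)

lemma finrank_Par : Module.finrank ℂ (Par k)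
    = (∑ p : Fin t × Fin t, W1 k p) + (∑ p : Fin t × Fin t, W2 k p) := by
  rw [Module.finrank_prod]
  congr 1 <;>
  · rw [Module.finrank_pi_fintype]
    congr 1
    funext p
    rw [Module.finrank_pi, Fintype.card_fin]

lemma sum_boole_lt (t s : ℕ) : (∑ i ∈ Finset.range t, if i < s then 1 else 0) = min s t := by
  induction t with
  | zero => simp
  | succ t IH =>
    rw [Finset.sum_range_succ, IH]
    by_cases h : t < s
    · rw [if_pos h]; omega
    · rw [if_neg h]; omega

lemma sumW1 (w : ℕ) (hw : ∑ i, k i = w) :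
    ∑ p : Fin t × Fin t, W1 k p = (t+1) * w := by
  have hswap : ∑ p : Fin t × Fin t, W1 k p = ∑ p : Fin t × Fin t, W1 k (p.2, p.1) :=
    Fintype.sum_equiv (Equiv.prodComm _ _) _ _ (fun p => rfl)
  have hpair : ∀ p : Fin t × Fin t, W1 k p + W1 k (p.2, p.1)
      = (k p.1 + k p.2) + (if p.1 = p.2 then k p.1 + k p.2 else 0) := by
    rintro ⟨i, j⟩
    unfold W1
    rcases eq_or_ne i j with rfl | hne
    · simp
    · by_cases hij : i ≤ j
      · have hji : ¬ (j ≤ i) := fun hh => hne (le_antisymm hij hh)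
        simp only [if_pos hij, if_neg hji, if_neg hne]
        try omega
      · have hji : j ≤ i := le_of_not_ge hij
        simp only [if_neg hij, if_pos hji, if_neg hne]
        try omega
  have h2 : 2 * (∑ p : Fin t × Fin t, W1 k p)
      = ∑ p : Fin t × Fin t, ((k p.1 + k p.2) + (if p.1 = p.2 then k p.1 + k p.2 else 0)) := by
    rw [two_mul]
    nth_rewrite 2 [hswap]
    rw [← Finset.sum_add_distrib]
    exact Finset.sum_congr rfl (fun p _ => hpair p)
  have h3 : ∑ p : Fin t × Fin t, (k p.1 + k p.2) = 2 * (t * w) := by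
    rw [Finset.sum_add_distrib]
    have ha : ∑ p : Fin t × Fin t, k p.1 = t * w := by
      rw [Fintype.sum_prod_type]
      simp only [Finset.sum_const, Finset.card_univ, Fintype.card_fin, smul_eq_mul]
      rw [← Finset.mul_sum, hw]
    have hb : ∑ p : Fin t × Fin t, k p.2 = t * w := by
      rw [Fintype.sum_prod_type]
      simp only [Finset.sum_const, Finset.card_univ, Fintype.card_fin, smul_eq_mul]
      rw [hw]
    omega
  have h4 : ∑ p : Fin t × Fin t, (if p.1 = p.2 then k p.1 + k p.2 else 0) = 2 * w := by
    rw [Fintype.sum_prod_type]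
    have : ∀ i : Fin t, (∑ j : Fin t, if i = j then k i + k j else 0) = 2 * k i := by
      intro i
      rw [Finset.sum_ite_eq]
      simp [two_mul]
    rw [Finset.sum_congr rfl (fun i _ => this i), ← Finset.mul_sum, hw]
  rw [Finset.sum_add_distrib, h3, h4] at h2
  have he : (t+1) * w = t * w + w := by ring
  omega

lemma sumW2 (hpair : ∀ i j : Fin t, (k j + 1 - k i) + (k i + 1 - k j) = 2) :
    ∑ p : Fin t × Fin t, W2 k p = t * t := by
  have hswap : ∑ p : Fin t × Fin t, W2 k p = ∑ p : Fin t × Fin t, W2 k (p.2, p.1) :=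
    Fintype.sum_equiv (Equiv.prodComm _ _) _ _ (fun p => rfl)
  have h2 : 2 * (∑ p : Fin t × Fin t, W2 k p) = ∑ _p : Fin t × Fin t, 2 := by
    rw [two_mul]
    nth_rewrite 2 [hswap]
    rw [← Finset.sum_add_distrib]
    exact Finset.sum_congr rfl (fun p _ => hpair p.1 p.2)
  simp only [Finset.sum_const, Finset.card_univ, Fintype.card_prod, Fintype.card_fin,
    smul_eq_mul, mul_one] at h2
  omega

lemma card_Idx (w : ℕ) (hw : ∑ i, k i = w) : Fintype.card (Idx k) = 2 * w + t := by
  rw [Fintype.card_sigma]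
  have : ∀ i : Fin t, Fintype.card (Fin (2 * k i + 1)) = 2 * k i + 1 := fun i => Fintype.card_fin _
  rw [Finset.sum_congr rfl (fun i _ => this i)]
  rw [Finset.sum_add_distrib, ← Finset.mul_sum, hw]
  simp [Finset.card_univ]

lemma range_dim (w : ℕ) (hw : ∑ i, k i = w)
    (hmon : ∀ u v : Fin t, u ≤ v → k v ≤ k u)
    (hpair : ∀ i j : Fin t, (k j + 1 - k i) + (k i + 1 - k j) = 2) :
    Module.finrank ℂ (LinearMap.range (congT (AA k) (BB k)))
      = (2*w + t)*(2*w + t) - ((t+1) * w + t * t) := by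
  have hrn := LinearMap.finrank_range_add_finrank_ker (congT (AA k) (BB k))
  have hdom : Module.finrank ℂ (Matrix (Idx k) (Idx k) ℂ) = (2*w + t)*(2*w + t) := by
    rw [Module.finrank_matrix, card_Idx w hw, Module.finrank_self, Nat.mul_one]
  have hker : Module.finrank ℂ (LinearMap.ker (congT (AA k) (BB k))) = (t+1) * w + t * t := by
    rw [ker_dim hmon, finrank_Par, sumW1 w hw, sumW2 hpair]
  omega




lemma gmon (n w : ℕ) : ∀ u v : Fin (n - 2*w), u ≤ v → genIdx n w v ≤ genIdx n w u := by
  intro u v huv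
  have h : u.1 ≤ v.1 := huv
  unfold genIdx
  split_ifs <;> omega

lemma gpair (n w : ℕ) (i j : Fin (n - 2*w)) :
    (genIdx n w j + 1 - genIdx n w i) + (genIdx n w i + 1 - genIdx n w j) = 2 := by
  unfold genIdx
  split_ifs <;> omega

lemma gsum (n w : ℕ) (ht : 0 < n - 2*w) : ∑ i, genIdx n w i = w := by
  have h1 : ∀ i : Fin (n - 2*w), genIdx n w i
      = w / (n - 2*w) + (if i.1 < w % (n - 2*w) then 1 else 0) := by
    intro i; unfold genIdx; split_ifs <;> omega
  rw [Finset.sum_congr rfl (fun i _ => h1 i), Finset.sum_add_distrib]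
  have h2 : (∑ _i : Fin (n - 2*w), w / (n - 2*w)) = (n - 2*w) * (w / (n - 2*w)) := by
    simp [Finset.sum_const, Finset.card_univ, Fintype.card_fin, mul_comm]
  have h3 : (∑ i : Fin (n - 2*w), if i.1 < w % (n - 2*w) then 1 else 0) = w % (n - 2*w) := by
    rw [Fin.sum_univ_eq_sum_range (fun i => if i < w % (n - 2*w) then 1 else 0) (n - 2*w),
      sum_boole_lt]
    have : w % (n - 2*w) < n - 2*w := Nat.mod_lt _ ht
    omega
  rw [h2, h3]
  have h4 := Nat.div_add_mod w (n - 2*w)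
  omega

lemma range_reindex {κ : Type*} [Fintype κ] [DecidableEq κ]
    {t : ℕ} {k : Fin t → ℕ} (e : Idx k ≃ κ) (A B : Matrix (Idx k) (Idx k) ℂ) :
    Module.finrank ℂ (LinearMap.range (congT (Matrix.reindex e e A) (Matrix.reindex e e B)))
      = Module.finrank ℂ (LinearMap.range (congT A B)) := by
  set E := Matrix.reindexLinearEquiv (R := ℂ) (A := ℂ) e e with hE
  set E2 := LinearEquiv.prodCongr E E with hE2
  have hmul : ∀ (M N : Matrix (Idx k) (Idx k) ℂ),
      Matrix.reindex e e M * Matrix.reindex e e N = Matrix.reindex e e (M * N) := by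
    intro M N
    simp only [Matrix.reindex_apply]
    exact Matrix.submatrix_mul_equiv M N _ _ _
  have htr : ∀ M : Matrix (Idx k) (Idx k) ℂ,
      (Matrix.reindex e e M)ᵀ = Matrix.reindex e e Mᵀ := by
    intro M
    simp only [Matrix.reindex_apply, Matrix.transpose_submatrix]
  have key : congT (Matrix.reindex e e A) (Matrix.reindex e e B)
      = (E2.toLinearMap.comp ((congT A B).comp E.symm.toLinearMap)) := by
    apply LinearMap.ext
    intro Y
    show (Yᵀ * Matrix.reindex e e A + Matrix.reindex e e A * Y,
          Yᵀ * Matrix.reindex e e B + Matrix.reindex e e B * Y)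
        = (E ((E.symm Y)ᵀ * A + A * (E.symm Y)), E ((E.symm Y)ᵀ * B + B * (E.symm Y)))
    have hY : Y = Matrix.reindex e e (E.symm Y) := by
      show Y = Matrix.reindex e e (Matrix.reindexLinearEquiv (R := ℂ) (A := ℂ) e.symm e.symm Y)
      simp [Matrix.reindexLinearEquiv_apply]
    have hgen : ∀ C : Matrix (Idx k) (Idx k) ℂ,
        Yᵀ * Matrix.reindex e e C + Matrix.reindex e e C * Y
          = E ((E.symm Y)ᵀ * C + C * (E.symm Y)) := by
      intro C
      conv_lhs => rw [hY]
      rw [htr, hmul, hmul, map_add]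
      rfl
    rw [Prod.mk.injEq]
    exact ⟨hgen A, hgen B⟩
  rw [key]
  rw [LinearMap.range_comp]
  rw [LinearMap.range_comp]
  have hrs : LinearMap.range E.symm.toLinearMap = ⊤ := LinearEquiv.range E.symm
  rw [hrs, Submodule.map_top]
  exact LinearEquiv.finrank_map_eq E2 _

theorem final_scratch (m r d : ℕ) (hm : 2 ≤ m) (hd : Odd d) (hr : 2 ≤ 2 * r) (hrm : 2 * r ≤ m - 1)
    (w : ℕ) (hw : 2 * w = m * (d - 1) + 2 * r)
    (e : Idx (genIdx (m*d) w) ≃ Fin (m*d)) :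
    Module.finrank ℂ
        (LinearMap.range (congT (Matrix.reindex e e (AA (genIdx (m*d) w)))
          (Matrix.reindex e e (BB (genIdx (m*d) w))))) =
      m*d * (m*d - 1) - (m - 2*r - 1) * (m * (d+1) - 2*r) / 2 := by
  obtain ⟨c, rfl⟩ := hd
  have hda : m * (2*c+1-1) = 2*(m*c) := by
    have h : 2*c+1-1 = 2*c := by omega
    rw [h]; ring
  have hdb : m * (2*c+1) = 2*(m*c) + m := by ring
  have hdc : m * (2*c+1+1) = 2*(m*c) + 2*m := by ring
  have ht : m*(2*c+1) - 2*w = m - 2*r := by omega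
  have htpos : 0 < m*(2*c+1) - 2*w := by omega
  have hw1 : 1 ≤ w := by omega
  have hsum : ∑ i, genIdx (m*(2*c+1)) w i = w := gsum _ w htpos
  rw [range_reindex e, range_dim w hsum (gmon _ w) (gpair _ w)]
  obtain ⟨t', htp⟩ : ∃ t', m*(2*c+1) - 2*w = t' + 1 := ⟨m*(2*c+1) - 2*w - 1, by omega⟩
  rw [htp]
  have hnum : (m - 2*r - 1) * (m * (2*c+1+1) - 2*r) = 2 * (t' * (w + (t'+1))) := by
    have h1 : m - 2*r - 1 = t' := by omega
    have h2 : m * (2*c+1+1) - 2*r = 2 * (w + (t'+1)) := by omega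
    rw [h1, h2]
    ring
  rw [hnum, Nat.mul_div_cancel_left _ (by norm_num : 0 < 2)]
  have hmd : m * (2*c+1) = 2*w + (t'+1) := by omega
  rw [hmd]
  have hsub : 2*w + (t'+1) - 1 = 2*w + t' := by omega
  rw [hsub]
  have hA1 : (2*w + (t'+1)) * (2*w + (t'+1))
      = ((t'+1+1) * w + (t'+1) * (t'+1)) + w * (4*w + 3*t' + 2) := by ring
  have hA2 : (2*w + (t'+1)) * (2*w + t')
      = t' * (w + (t'+1)) + w * (4*w + 3*t' + 2) := by ring
  rw [hA1, hA2, Nat.add_sub_cancel_left, Nat.add_sub_cancel_left]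


end Aux
end
end

/-- The codimension of the congruence orbit of the generic `md × md`
skew-symmetric pencil `𝒲` (with `n = md`, `w = (m(d−1)+2r)/2`) in the space of `md × md`
skew-symmetric pencils equals `(1/2)(m−2r−1)(m(d+1)−2r)`; equivalently, the tangent
space at `𝒲` has dimension `n(n−1) − (1/2)(m−2r−1)(m(d+1)−2r)`. -/
theorem codim_congOrbit_generic_linearization
    (m r d : ℕ) (hm : 2 ≤ m) (hd : Odd d) (hr : 2 ≤ 2 * r) (hrm : 2 * r ≤ m - 1)
    (w : ℕ) (hw : 2 * w = m * (d - 1) + 2 * r)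
    (e : ((i : Fin (m*d - 2*w)) × Fin (2 * genIdx (m*d) w i + 1)) ≃ Fin (m*d)) :
    Module.finrank ℂ
        (LinearMap.range (congTangentMap (Matrix.reindex e e (WA (m*d) w))
          (Matrix.reindex e e (WB (m*d) w)))) =
      m*d * (m*d - 1) - (m - 2*r - 1) * (m * (d+1) - 2*r) / 2 := by
  have hWA : WA (m*d) w = Aux.AA (genIdx (m*d) w) := rfl
  have hWB : WB (m*d) w = Aux.BB (genIdx (m*d) w) := rfl
  have hbridge : congTangentMap (Matrix.reindex e e (WA (m*d) w)) (Matrix.reindex e e (WB (m*d) w))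
      = Aux.congT (Matrix.reindex e e (WA (m*d) w)) (Matrix.reindex e e (WB (m*d) w)) :=
    LinearMap.ext fun X => rfl
  rw [hbridge, hWA, hWB]
  exact Aux.final_scratch m r d hm hd hr hrm w hw e
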